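/- Let k ≥ 1 be an integer, V a finite set, 𝓔 a finite family of subsets of V each of size at least 1 and at most k, and b_v ≥ 1 an integer capacity for each v ∈ V. Let x : 𝓔 → ℝ satisfy 0 ≤ x_S ≤ 1 for all S ∈ 𝓔 and Σ_{S ∈ 𝓔 : v ∈ S} x_S ≤ b_v for every v ∈ V. Then x/(k+1) lies in the convex hull of the indicator vectors of integral b-matchings, i.e., of subsets M ⊆ 𝓔 with |{S ∈ M : v ∈ S}| ≤ b_v for every v ∈ V. -/

import Mathlib

open Finset

section Greedy

variable {V : Type*} [DecidableEq V] {𝓔 : Finset (Finset V)}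

/-- Greedy construction of a b-matching from a list of hyperedges. -/
private def greedyAux (b : V → ℤ) :
    List {S : Finset V // S ∈ 𝓔} → Finset {S : Finset V // S ∈ 𝓔} →
      Finset {S : Finset V // S ∈ 𝓔}
  | [], M => M
  | S :: l, M =>
    if ∀ v ∈ S.1, ((M.filter fun T => v ∈ T.1).card : ℤ) < b v then
      greedyAux b l (insert S M)
    else greedyAux b l M

private lemma greedy_mono (b : V → ℤ) :
    ∀ (l : List {S : Finset V // S ∈ 𝓔}) (M : Finset {S : Finset V // S ∈ 𝓔}),
      M ⊆ greedyAux b l M := by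
  intro l
  induction l with
  | nil => intro M; simp [greedyAux]
  | cons S l ih =>
    intro M
    simp only [greedyAux]
    split
    · exact (subset_insert S M).trans (ih _)
    · exact ih _

private lemma greedy_cap (b : V → ℤ) :
    ∀ (l : List {S : Finset V // S ∈ 𝓔}) (M : Finset {S : Finset V // S ∈ 𝓔}),
      (∀ v, ((M.filter fun T => v ∈ T.1).card : ℤ) ≤ b v) →
      ∀ v, (((greedyAux b l M).filter fun T => v ∈ T.1).card : ℤ) ≤ b v := by
  intro l
  induction l with
  | nil => intro M hM; simpa [greedyAux] using hM
  | cons S l ih =>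
    intro M hM
    simp only [greedyAux]
    split
    · rename_i hok
      apply ih
      intro v
      by_cases hv : v ∈ S.1
      · have h1 := hok v hv
        have h2 : ((insert S M).filter fun T => v ∈ T.1)
            = insert S (M.filter fun T => v ∈ T.1) := by
          rw [Finset.filter_insert, if_pos hv]
        rw [h2]
        have h3 := Finset.card_insert_le S (M.filter fun T => v ∈ T.1)
        have h4 : (((insert S (M.filter fun T => v ∈ T.1)).card : ℤ))
            ≤ ((M.filter fun T => v ∈ T.1).card : ℤ) + 1 := by exact_mod_cast h3
        omega
      · have h2 : ((insert S M).filter fun T => v ∈ T.1)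
            = (M.filter fun T => v ∈ T.1) := by
          rw [Finset.filter_insert, if_neg hv]
        rw [h2]; exact hM v
    · exact ih _ hM

private lemma greedy_mem (b : V → ℤ) :
    ∀ (l : List {S : Finset V // S ∈ 𝓔}) (M : Finset {S : Finset V // S ∈ 𝓔})
      (T : {S : Finset V // S ∈ 𝓔}), T ∈ greedyAux b l M → T ∈ M ∨ T ∈ l := by
  intro l
  induction l with
  | nil => intro M T hT; left; simpa [greedyAux] using hT
  | cons S l ih =>
    intro M T hT
    simp only [greedyAux] at hT
    split at hT
    · rcases ih _ T hT with h | h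
      · rcases Finset.mem_insert.1 h with h' | h'
        · right; simp [h']
        · left; exact h'
      · right; exact List.mem_cons_of_mem _ h
    · rcases ih _ T hT with h | h
      · left; exact h
      · right; exact List.mem_cons_of_mem _ h

private lemma greedy_blocked (b : V → ℤ) (c : {S : Finset V // S ∈ 𝓔} → ℝ) :
    ∀ (l : List {S : Finset V // S ∈ 𝓔}) (M : Finset {S : Finset V // S ∈ 𝓔}),
      l.Pairwise (fun S T => c T ≤ c S) →
      (∀ T ∈ M, ∀ S ∈ l, c S ≤ c T) →
      (∀ v, ((M.filter fun T => v ∈ T.1).card : ℤ) ≤ b v) →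
      ∀ S ∈ l, S ∉ greedyAux b l M →
        ∃ v ∈ S.1, (((greedyAux b l M).filter fun T => v ∈ T.1).card : ℤ) = b v ∧
          ∀ T ∈ (greedyAux b l M).filter fun T => v ∈ T.1, c S ≤ c T := by
  intro l
  induction l with
  | nil => intro M _ _ _ S hS; exact absurd hS List.not_mem_nil
  | cons S0 l ih =>
    intro M hsort hord hM S hS hSnot
    by_cases hok : ∀ v ∈ S0.1, ((M.filter fun T => v ∈ T.1).card : ℤ) < b v
    · have hG : greedyAux b (S0 :: l) M = greedyAux b l (insert S0 M) := by
        simp only [greedyAux, if_pos hok]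
      rw [hG] at hSnot ⊢
      have hS0G : S0 ∈ greedyAux b l (insert S0 M) :=
        greedy_mono b l _ (Finset.mem_insert_self _ _)
      have hSl : S ∈ l := by
        rcases List.mem_cons.1 hS with h | h
        · exact absurd (h ▸ hS0G) hSnot
        · exact h
      have hM' : ∀ v, (((insert S0 M).filter fun T => v ∈ T.1).card : ℤ) ≤ b v := by
        intro v
        by_cases hv : v ∈ S0.1
        · have h1 := hok v hv
          have h2 : ((insert S0 M).filter fun T => v ∈ T.1)
              = insert S0 (M.filter fun T => v ∈ T.1) := by
            rw [Finset.filter_insert, if_pos hv]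
          rw [h2]
          have h3 := Finset.card_insert_le S0 (M.filter fun T => v ∈ T.1)
          have h4 : (((insert S0 (M.filter fun T => v ∈ T.1)).card : ℤ))
              ≤ ((M.filter fun T => v ∈ T.1).card : ℤ) + 1 := by exact_mod_cast h3
          omega
        · rw [Finset.filter_insert, if_neg hv]; exact hM v
      have hord' : ∀ T ∈ insert S0 M, ∀ S' ∈ l, c S' ≤ c T := by
        intro T hT S' hS'
        rcases Finset.mem_insert.1 hT with h | h
        · exact h ▸ (List.rel_of_pairwise_cons hsort hS')
        · exact hord T h S' (List.mem_cons_of_mem _ hS')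
      exact ih (insert S0 M) hsort.of_cons hord' hM' S hSl hSnot
    · have hG : greedyAux b (S0 :: l) M = greedyAux b l M := by
        simp only [greedyAux, if_neg hok]
      rw [hG] at hSnot ⊢
      rcases List.mem_cons.1 hS with h | h
      · subst h
        push_neg at hok
        obtain ⟨v, hv, hbv⟩ := hok
        have h1 : ((M.filter fun T => v ∈ T.1).card : ℤ) = b v :=
          le_antisymm (hM v) hbv
        have hsub : (M.filter fun T => v ∈ T.1)
            ⊆ ((greedyAux b l M).filter fun T => v ∈ T.1) :=
          Finset.filter_subset_filter _ (greedy_mono b l M)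
        have hGcap : (((greedyAux b l M).filter fun T => v ∈ T.1).card : ℤ) ≤ b v :=
          greedy_cap b l M hM v
        have hcardle : ((greedyAux b l M).filter fun T => v ∈ T.1).card
            ≤ (M.filter fun T => v ∈ T.1).card := by
          have : (((greedyAux b l M).filter fun T => v ∈ T.1).card : ℤ)
              ≤ ((M.filter fun T => v ∈ T.1).card : ℤ) := by omega
          exact_mod_cast this
        have heq : (M.filter fun T => v ∈ T.1)
            = ((greedyAux b l M).filter fun T => v ∈ T.1) :=
          Finset.eq_of_subset_of_card_le hsub hcardle
        refine ⟨v, hv, by rw [← heq]; exact h1, ?_⟩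
        intro T hT
        rw [← heq] at hT
        exact hord T (Finset.mem_filter.1 hT).1 S List.mem_cons_self
      · exact ih M hsort.of_cons
          (fun T hT S' hS' => hord T hT S' (List.mem_cons_of_mem _ hS')) hM S h hSnot

private lemma exists_bMatching_greedy {V : Type*} [Fintype V] [DecidableEq V]
    (k : ℕ) (𝓔 : Finset (Finset V)) (b : V → ℤ)
    (hcard : ∀ S ∈ 𝓔, 1 ≤ S.card ∧ S.card ≤ k)
    (hb : ∀ v : V, 1 ≤ b v)
    (x : {S : Finset V // S ∈ 𝓔} → ℝ)
    (hx0 : ∀ S, 0 ≤ x S) (hx1 : ∀ S, x S ≤ 1)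
    (hxcap : ∀ v : V,
      ∑ S : {S : Finset V // S ∈ 𝓔}, (if v ∈ S.1 then x S else 0) ≤ (b v : ℝ))
    (c : {S : Finset V // S ∈ 𝓔} → ℝ) :
    ∃ M : Finset {S : Finset V // S ∈ 𝓔},
      (∀ v, ((M.filter fun T => v ∈ T.1).card : ℤ) ≤ b v) ∧
      ∑ S, c S * x S ≤ ((k : ℝ) + 1) * ∑ T ∈ M, c T := by
  classical
  set r : {S : Finset V // S ∈ 𝓔} → {S : Finset V // S ∈ 𝓔} → Prop :=
    fun S T => c T ≤ c S with hr
  haveI : IsTotal {S : Finset V // S ∈ 𝓔} r := ⟨fun a b' => le_total (c b') (c a)⟩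
  haveI : IsTrans {S : Finset V // S ∈ 𝓔} r :=
    ⟨fun _ _ _ h1 h2 => le_trans h2 h1⟩
  set P : Finset {S : Finset V // S ∈ 𝓔} := univ.filter fun S => 0 < c S with hP
  set l : List {S : Finset V // S ∈ 𝓔} := List.insertionSort r P.toList with hl
  have hsort : l.Pairwise r := List.pairwise_insertionSort r P.toList
  have hmem : ∀ S, S ∈ l ↔ S ∈ P := fun S => by
    rw [hl, (List.perm_insertionSort r P.toList).mem_iff, Finset.mem_toList]
  have hcap0 : ∀ v, (((∅ : Finset {S : Finset V // S ∈ 𝓔}).filter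
      fun T => v ∈ T.1).card : ℤ) ≤ b v := by
    intro v; simp only [Finset.filter_empty, Finset.card_empty, Nat.cast_zero]
    linarith [hb v]
  set G : Finset {S : Finset V // S ∈ 𝓔} := greedyAux b l ∅ with hG
  have hGcap : ∀ v, ((G.filter fun T => v ∈ T.1).card : ℤ) ≤ b v :=
    greedy_cap b l ∅ hcap0
  have hGsub : ∀ T ∈ G, T ∈ P := by
    intro T hT
    rcases greedy_mem b l ∅ T hT with h | h
    · exact absurd h (Finset.notMem_empty T)
    · exact (hmem T).1 h
  have hGpos : ∀ T ∈ G, 0 < c T := fun T hT =>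
    (Finset.mem_filter.1 (hGsub T hT)).2
  have hGP : G ⊆ P := fun T hT => hGsub T hT
  have hblocked := greedy_blocked b c l ∅ hsort (by simp) hcap0
  refine ⟨G, hGcap, ?_⟩
  have cG_nonneg : 0 ≤ ∑ T ∈ G, c T :=
    Finset.sum_nonneg fun T hT => (hGpos T hT).le
  by_cases hV : Nonempty V
  · -- main case
    haveI := hV
    have key : ∀ S : {S : Finset V // S ∈ 𝓔}, ∃ v : V, S ∈ P \ G →
        v ∈ S.1 ∧ ((G.filter fun T => v ∈ T.1).card : ℤ) = b v ∧
          ∀ T ∈ G.filter fun T => v ∈ T.1, c S ≤ c T := by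
      intro S
      by_cases hS : S ∈ P \ G
      · obtain ⟨hS1, hS2⟩ := Finset.mem_sdiff.1 hS
        obtain ⟨v, hv, h1, h2⟩ := hblocked S ((hmem S).2 hS1) hS2
        exact ⟨v, fun _ => ⟨hv, h1, h2⟩⟩
      · exact ⟨Classical.arbitrary V, fun h => absurd h hS⟩
    choose φ hφ using key
    have step1 : ∑ S : {S : Finset V // S ∈ 𝓔}, c S * x S ≤ ∑ S ∈ P, c S * x S := by
      rw [← Finset.sum_filter_add_sum_filter_not univ (fun S => 0 < c S)
        (fun S => c S * x S)]
      have h0 : ∑ S ∈ univ.filter (fun S => ¬ 0 < c S), c S * x S ≤ 0 :=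
        Finset.sum_nonpos fun S hS =>
          mul_nonpos_iff.2 (Or.inr ⟨not_lt.1 (Finset.mem_filter.1 hS).2, hx0 S⟩)
      rw [hP]
      linarith
    have step2 : ∑ S ∈ P, c S * x S
        = ∑ S ∈ P \ G, c S * x S + ∑ S ∈ G, c S * x S :=
      (Finset.sum_sdiff hGP).symm
    have step3 : ∑ S ∈ G, c S * x S ≤ ∑ T ∈ G, c T :=
      Finset.sum_le_sum fun S hS =>
        mul_le_of_le_one_right (hGpos S hS).le (hx1 S)
    have step4 : ∑ S ∈ P \ G, c S * x S
        ≤ ∑ v : V, ∑ T ∈ G.filter fun T => v ∈ T.1, c T := by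
      rw [← Finset.sum_fiberwise_of_maps_to (g := φ)
        (fun S _ => Finset.mem_univ (φ S)) (fun S => c S * x S)]
      apply Finset.sum_le_sum
      intro v _
      have hCv0 : 0 ≤ ∑ T ∈ G.filter (fun T => v ∈ T.1), c T :=
        Finset.sum_nonneg fun T hT => (hGpos T (Finset.mem_filter.1 hT).1).le
      have hbv : (0:ℝ) < (b v : ℝ) := by
        have := hb v; exact_mod_cast lt_of_lt_of_le zero_lt_one this
      have hterm : ∀ S ∈ (P \ G).filter (fun S => φ S = v),
          c S * x S ≤ ((∑ T ∈ G.filter (fun T => v ∈ T.1), c T) / (b v : ℝ)) * x S := by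
        intro S hS
        obtain ⟨hS1, hS2⟩ := Finset.mem_filter.1 hS
        obtain ⟨hv1, hcardeq, hle⟩ := hφ S hS1
        subst hS2
        have h5 : (G.filter fun T => φ S ∈ T.1).card • c S
            ≤ ∑ T ∈ G.filter (fun T => φ S ∈ T.1), c T :=
          Finset.card_nsmul_le_sum _ _ _ hle
        rw [nsmul_eq_mul] at h5
        have hcast : ((G.filter fun T => φ S ∈ T.1).card : ℝ) = ((b (φ S)) : ℝ) := by
          exact_mod_cast congrArg (fun z : ℤ => (z : ℝ)) hcardeq
        rw [hcast] at h5
        have hcs : c S ≤ (∑ T ∈ G.filter (fun T => φ S ∈ T.1), c T) / (b (φ S) : ℝ) := by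
          rw [le_div_iff₀ hbv]
          linarith
        exact mul_le_mul_of_nonneg_right hcs (hx0 S)
      calc ∑ S ∈ (P \ G).filter (fun S => φ S = v), c S * x S
          ≤ ∑ S ∈ (P \ G).filter (fun S => φ S = v),
              ((∑ T ∈ G.filter (fun T => v ∈ T.1), c T) / (b v : ℝ)) * x S :=
            Finset.sum_le_sum hterm
        _ = ((∑ T ∈ G.filter (fun T => v ∈ T.1), c T) / (b v : ℝ))
              * ∑ S ∈ (P \ G).filter (fun S => φ S = v), x S := by rw [Finset.mul_sum]
        _ ≤ ((∑ T ∈ G.filter (fun T => v ∈ T.1), c T) / (b v : ℝ)) * (b v : ℝ) := by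
            apply mul_le_mul_of_nonneg_left ?_ (div_nonneg hCv0 hbv.le)
            calc ∑ S ∈ (P \ G).filter (fun S => φ S = v), x S
                = ∑ S ∈ (P \ G).filter (fun S => φ S = v),
                    (if v ∈ S.1 then x S else 0) := by
                  refine Finset.sum_congr rfl fun S hS => ?_
                  obtain ⟨hS1, hS2⟩ := Finset.mem_filter.1 hS
                  have hv1 := (hφ S hS1).1
                  rw [hS2] at hv1
                  rw [if_pos hv1]
              _ ≤ ∑ S : {S : Finset V // S ∈ 𝓔}, (if v ∈ S.1 then x S else 0) := by
                  apply Finset.sum_le_sum_of_subset_of_nonneg (Finset.subset_univ _)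
                  intro S _ _
                  split
                  · exact hx0 S
                  · exact le_rfl
              _ ≤ (b v : ℝ) := hxcap v
        _ = ∑ T ∈ G.filter (fun T => v ∈ T.1), c T := div_mul_cancel₀ _ hbv.ne'
    have step5 : ∑ v : V, ∑ T ∈ G.filter (fun T => v ∈ T.1), c T
        ≤ (k : ℝ) * ∑ T ∈ G, c T := by
      calc ∑ v : V, ∑ T ∈ G.filter (fun T => v ∈ T.1), c T
          = ∑ v : V, ∑ T ∈ G, (if v ∈ T.1 then c T else 0) :=
            Finset.sum_congr rfl fun v _ => Finset.sum_filter _ _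
        _ = ∑ T ∈ G, ∑ v : V, (if v ∈ T.1 then c T else 0) := Finset.sum_comm
        _ = ∑ T ∈ G, (T.1.card : ℝ) * c T := by
            refine Finset.sum_congr rfl fun T _ => ?_
            rw [← Finset.sum_filter]
            have : (univ.filter fun v => v ∈ T.1) = T.1 := Finset.filter_univ_mem T.1
            rw [this, Finset.sum_const, nsmul_eq_mul]
        _ ≤ ∑ T ∈ G, (k : ℝ) * c T := by
            refine Finset.sum_le_sum fun T hT => ?_
            refine mul_le_mul_of_nonneg_right ?_ (hGpos T hT).le
            exact_mod_cast (hcard T.1 T.2).2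
        _ = (k : ℝ) * ∑ T ∈ G, c T := (Finset.mul_sum _ _ _).symm
    linarith
  · -- V empty
    haveI : IsEmpty V := not_nonempty_iff.mp hV
    haveI : IsEmpty {S : Finset V // S ∈ 𝓔} := by
      refine ⟨fun S => ?_⟩
      have h1 := (hcard S.1 S.2).1
      have h2 : S.1 = ∅ := Finset.eq_empty_of_forall_notMem fun v _ => (IsEmpty.false v)
      rw [h2] at h1
      simp at h1
    have h1 : ∑ S : {S : Finset V // S ∈ 𝓔}, c S * x S = 0 := by
      rw [Finset.univ_eq_empty, Finset.sum_empty]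
    have h2 : G = ∅ := Finset.eq_empty_of_forall_notMem fun T _ => (IsEmpty.false T)
    rw [h1, h2, Finset.sum_empty, mul_zero]

end Greedy

/-- **k-hypergraph b-matching.** If `x` is a fractional b-matching of a k-bounded
hypergraph, then `x/(k+1)` lies in the convex hull of the indicator vectors of
integral b-matchings. -/
theorem kHypergraph_bMatching_in_convexHull
    {V : Type*} [Fintype V] [DecidableEq V]
    (k : ℕ) (hk : 1 ≤ k)
    (𝓔 : Finset (Finset V)) (b : V → ℤ)
    (hcard : ∀ S ∈ 𝓔, 1 ≤ S.card ∧ S.card ≤ k)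
    (hb : ∀ v : V, 1 ≤ b v)
    (x : {S : Finset V // S ∈ 𝓔} → ℝ)
    (hx0 : ∀ S, 0 ≤ x S) (hx1 : ∀ S, x S ≤ 1)
    (hxcap : ∀ v : V,
      ∑ S : {S : Finset V // S ∈ 𝓔}, (if v ∈ S.1 then x S else 0) ≤ (b v : ℝ)) :
    (fun S => x S / (k + 1)) ∈
      convexHull ℝ {χ : {S : Finset V // S ∈ 𝓔} → ℝ |
        ∃ M : Finset (Finset V), M ⊆ 𝓔 ∧
          (∀ v : V, ((M.filter (fun S => v ∈ S)).card : ℤ) ≤ b v) ∧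
          χ = fun S => if S.1 ∈ M then 1 else 0} := by
  classical
  by_contra hcon
  have hfin : Set.Finite {χ : {S : Finset V // S ∈ 𝓔} → ℝ |
      ∃ M : Finset (Finset V), M ⊆ 𝓔 ∧
        (∀ v : V, ((M.filter (fun S => v ∈ S)).card : ℤ) ≤ b v) ∧
        χ = fun S => if S.1 ∈ M then 1 else 0} := by
    apply Set.Finite.subset (Set.finite_range
      (fun M : Finset (Finset V) =>
        fun S : {S : Finset V // S ∈ 𝓔} => if S.1 ∈ M then (1:ℝ) else 0))
    rintro χ ⟨M, _, _, rfl⟩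
    exact ⟨M, rfl⟩
  obtain ⟨f, u, hfu, hfy⟩ :=
    geometric_hahn_banach_closed_point (convex_convexHull ℝ _)
      (hfin.isClosed_convexHull (𝕜 := ℝ)) hcon
  set c : {S : Finset V // S ∈ 𝓔} → ℝ := fun S => f (Pi.single S 1) with hc
  have feval : ∀ z : {S : Finset V // S ∈ 𝓔} → ℝ, f z = ∑ S, z S * c S := by
    intro z
    calc f z = f (∑ S : {S : Finset V // S ∈ 𝓔}, Pi.single S (z S)) := by
          rw [Finset.univ_sum_single]
      _ = ∑ S : {S : Finset V // S ∈ 𝓔}, f (Pi.single S (z S)) := map_sum f _ _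
      _ = ∑ S, z S * c S := by
          refine Finset.sum_congr rfl fun S _ => ?_
          have hsingle : (Pi.single S (z S) : {S : Finset V // S ∈ 𝓔} → ℝ)
              = z S • (Pi.single S (1:ℝ) : {S : Finset V // S ∈ 𝓔} → ℝ) := by
            funext w
            by_cases hw : w = S
            · subst hw; simp
            · simp [Pi.single_eq_of_ne hw]
          rw [hsingle, map_smul, smul_eq_mul]
  obtain ⟨M', hM'cap, hM'sum⟩ :=
    exists_bMatching_greedy k 𝓔 b hcard hb x hx0 hx1 hxcap c
  set M : Finset (Finset V) := M'.image Subtype.val with hM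
  have hMM' : ∀ S : {S : Finset V // S ∈ 𝓔}, S.1 ∈ M ↔ S ∈ M' := by
    intro S
    constructor
    · intro h
      obtain ⟨a, ha, hav⟩ := Finset.mem_image.1 h
      rwa [show a = S from Subtype.ext hav] at ha
    · exact fun h => Finset.mem_image_of_mem _ h
  have hχmem : (fun S : {S : Finset V // S ∈ 𝓔} => if S.1 ∈ M then (1:ℝ) else 0)
      ∈ {χ : {S : Finset V // S ∈ 𝓔} → ℝ |
        ∃ M : Finset (Finset V), M ⊆ 𝓔 ∧
          (∀ v : V, ((M.filter (fun S => v ∈ S)).card : ℤ) ≤ b v) ∧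
          χ = fun S => if S.1 ∈ M then 1 else 0} := by
    refine ⟨M, ?_, ?_, rfl⟩
    · intro S hS
      obtain ⟨T, _, rfl⟩ := Finset.mem_image.1 hS
      exact T.2
    · intro v
      have heq : M.filter (fun S => v ∈ S)
          = (M'.filter fun T => v ∈ T.1).image Subtype.val := by
        rw [hM, Finset.filter_image]
      rw [heq, Finset.card_image_of_injective _ Subtype.val_injective]
      exact hM'cap v
  have hfχ : f (fun S : {S : Finset V // S ∈ 𝓔} => if S.1 ∈ M then (1:ℝ) else 0)
      = ∑ T ∈ M', c T := by
    rw [feval]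
    calc ∑ S : {S : Finset V // S ∈ 𝓔}, (if S.1 ∈ M then (1:ℝ) else 0) * c S
        = ∑ S : {S : Finset V // S ∈ 𝓔}, (if S ∈ M' then c S else 0) := by
          refine Finset.sum_congr rfl fun S _ => ?_
          by_cases h : S ∈ M'
          · rw [if_pos ((hMM' S).2 h), if_pos h, one_mul]
          · rw [if_neg (fun hh => h ((hMM' S).1 hh)), if_neg h, zero_mul]
      _ = ∑ T ∈ M', c T := by rw [Finset.sum_ite_mem, Finset.univ_inter]
  have hk1 : (0:ℝ) < (k:ℝ) + 1 := by positivity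
  have hfyval : f (fun S : {S : Finset V // S ∈ 𝓔} => x S / (k + 1))
      = (∑ S, c S * x S) / ((k:ℝ) + 1) := by
    rw [feval, Finset.sum_div]
    refine Finset.sum_congr rfl fun S _ => ?_
    field_simp
  have h1 : f (fun S : {S : Finset V // S ∈ 𝓔} => x S / (k + 1)) ≤ ∑ T ∈ M', c T := by
    rw [hfyval, div_le_iff₀ hk1]
    linarith
  have h2 := hfu _ (subset_convexHull ℝ _ hχmem)
  rw [hfχ] at h2
  linarith
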